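/- arXiv:1810.04393 — 2 statements merged into one kernel-verified Lean document; each statement's English description precedes it below -/
import Mathlib

section
/- Let n ≥ 2, n < p < ∞, C > 0, and let u : ℝⁿ → ℝ be a nonconstant differentiable function with x ↦ ‖∇u(x)‖^p Lebesgue integrable, satisfying the localized Morrey estimate: for all x, y ∈ ℝⁿ, |u(x) − u(y)| ≤ C ‖x − y‖^{1−n/p} (∫_{B_{‖x−y‖/2}((x+y)/2)} ‖∇u(z)‖^p dz)^{1/p}. Then the (1−n/p)-Hölder ratio of u attains its supremum: there exist x0, y0 ∈ ℝⁿ with x0 ≠ y0 such that for all x ≠ y, |u(x) − u(y)|/‖x − y‖^{1−n/p} ≤ |u(x0) − u(y0)|/‖x0 − y0‖^{1−n/p}. -/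
open scoped RealInnerProductSpace

section geom
variable {F : Type*} [NormedAddCommGroup F] [InnerProductSpace ℝ F]

lemma aux_mid (p q : F) (hp : ‖p‖ = 1) (hq : ‖q‖ = 1) (h : (3:ℝ)/5 ≤ ‖p + q‖) :
    ∃ m : F, ‖m‖ = 1 ∧ ⟪p, m⟫ = ‖p + q‖ / 2 ∧ ⟪m, q⟫ = ‖p + q‖ / 2 := by
  set s := ‖p + q‖ with hs
  have hs0 : s ≠ 0 := by positivity
  have hsq : s ^ 2 = 2 + 2 * ⟪p, q⟫ := by
    have := norm_add_sq_real p q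
    rw [hp, hq] at this; rw [hs, this]; ring
  refine ⟨s⁻¹ • (p + q), ?_, ?_, ?_⟩
  · rw [norm_smul, ← hs, Real.norm_eq_abs, abs_of_pos (by positivity : (0:ℝ) < s⁻¹)]
    field_simp
  · rw [real_inner_smul_right, inner_add_right, real_inner_self_eq_norm_sq, hp]
    field_simp
    nlinarith [hsq]
  · rw [real_inner_smul_left, inner_add_left, real_inner_self_eq_norm_sq, hq]
    field_simp
    nlinarith [hsq, real_inner_comm p q]

/-- distance between two unit vectors from their inner product -/
lemma aux_dist_sq (a b : F) (ha : ‖a‖ = 1) (hb : ‖b‖ = 1) :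
    ‖a - b‖ ^ 2 = 2 - 2 * ⟪a, b⟫ := by
  have := norm_sub_sq_real a b
  rw [ha, hb] at this; rw [this]; ring

lemma aux_le_one_of_sq {x : ℝ} (hx : 0 ≤ x) (h : x ^ 2 ≤ 1) : x ≤ 1 := by nlinarith

lemma aux_chain4 (p q : F) (hp : ‖p‖ = 1) (hq : ‖q‖ = 1) (h : -(4/5 : ℝ) ≤ ⟪p, q⟫) :
    ∃ c1 c2 c3 : F, ‖c1‖ = 1 ∧ ‖c2‖ = 1 ∧ ‖c3‖ = 1 ∧
      ‖p - c1‖ ≤ 1 ∧ ‖c1 - c2‖ ≤ 1 ∧ ‖c2 - c3‖ ≤ 1 ∧ ‖c3 - q‖ ≤ 1 := by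
  have hsq : ‖p + q‖ ^ 2 = 2 + 2 * ⟪p, q⟫ := by
    have := norm_add_sq_real p q; rw [hp, hq] at this; rw [this]; ring
  have hs35 : (3:ℝ)/5 ≤ ‖p + q‖ := by
    nlinarith [norm_nonneg (p + q), hsq]
  obtain ⟨c2, hc2, hpc2, hc2q⟩ := aux_mid p q hp hq hs35
  have hpc2' : (3:ℝ)/10 ≤ ⟪p, c2⟫ := by rw [hpc2]; linarith
  have hc2q' : (3:ℝ)/10 ≤ ⟪c2, q⟫ := by rw [hc2q]; linarith
  -- left subdivision
  have hsq1 : ‖p + c2‖ ^ 2 = 2 + 2 * ⟪p, c2⟫ := by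
    have := norm_add_sq_real p c2; rw [hp, hc2] at this; rw [this]; ring
  have hs1 : (8:ℝ)/5 ≤ ‖p + c2‖ := by nlinarith [norm_nonneg (p + c2)]
  obtain ⟨c1, hc1, hpc1, hc1c2⟩ := aux_mid p c2 hp hc2 (by linarith)
  -- right subdivision
  have hsq2 : ‖c2 + q‖ ^ 2 = 2 + 2 * ⟪c2, q⟫ := by
    have := norm_add_sq_real c2 q; rw [hc2, hq] at this; rw [this]; ring
  have hs2 : (8:ℝ)/5 ≤ ‖c2 + q‖ := by nlinarith [norm_nonneg (c2 + q)]
  obtain ⟨c3, hc3, hc2c3, hc3q⟩ := aux_mid c2 q hc2 hq (by linarith)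
  refine ⟨c1, c2, c3, hc1, hc2, hc3, ?_, ?_, ?_, ?_⟩
  · refine aux_le_one_of_sq (norm_nonneg _) ?_
    rw [aux_dist_sq p c1 hp hc1, hpc1]; linarith
  · refine aux_le_one_of_sq (norm_nonneg _) ?_
    rw [aux_dist_sq c1 c2 hc1 hc2, hc1c2]; linarith
  · refine aux_le_one_of_sq (norm_nonneg _) ?_
    rw [aux_dist_sq c2 c3 hc2 hc3, hc2c3]; linarith
  · refine aux_le_one_of_sq (norm_nonneg _) ?_
    rw [aux_dist_sq c3 q hc3 hq, hc3q]; linarith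

lemma aux_chain9
    (hortho : ∀ p : F, ‖p‖ = 1 → ∃ e : F, ‖e‖ = 1 ∧ ⟪p, e⟫ = 0)
    (p q : F) (hp : ‖p‖ = 1) (hq : ‖q‖ = 1) :
    ∃ c1 c2 c3 c4 c5 c6 c7 : F,
      (‖c1‖ = 1 ∧ ‖c2‖ = 1 ∧ ‖c3‖ = 1 ∧ ‖c4‖ = 1 ∧ ‖c5‖ = 1 ∧ ‖c6‖ = 1 ∧ ‖c7‖ = 1) ∧
      (‖p - c1‖ ≤ 1 ∧ ‖c1 - c2‖ ≤ 1 ∧ ‖c2 - c3‖ ≤ 1 ∧ ‖c3 - c4‖ ≤ 1 ∧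
       ‖c4 - c5‖ ≤ 1 ∧ ‖c5 - c6‖ ≤ 1 ∧ ‖c6 - c7‖ ≤ 1 ∧ ‖c7 - q‖ ≤ 1) := by
  by_cases h : -(4/5 : ℝ) ≤ ⟪p, q⟫
  · obtain ⟨c1, c2, c3, h1, h2, h3, e1, e2, e3, e4⟩ := aux_chain4 p q hp hq h
    exact ⟨c1, c2, c3, q, q, q, q, ⟨h1, h2, h3, hq, hq, hq, hq⟩,
      e1, e2, e3, e4, by simp, by simp, by simp, by simp⟩
  · push_neg at h
    obtain ⟨e, he, hpe⟩ := hortho p hp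
    have hsq : ‖p + q‖ ^ 2 = 2 + 2 * ⟪p, q⟫ := by
      have := norm_add_sq_real p q; rw [hp, hq] at this; rw [this]; ring
    have hsmall : ‖p + q‖ ≤ (4:ℝ)/5 := by nlinarith [norm_nonneg (p + q)]
    have heq : -(4/5 : ℝ) ≤ ⟪e, q⟫ := by
      have h1 : ⟪e, q⟫ = ⟪e, p + q⟫ := by
        rw [inner_add_right, real_inner_comm p e] at *; rw [hpe]; ring
      have h2 : |⟪e, p + q⟫| ≤ ‖e‖ * ‖p + q‖ := abs_real_inner_le_norm e (p + q)
      rw [he, one_mul] at h2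
      have := abs_le.1 h2
      linarith [this.1]
    obtain ⟨a1, a2, a3, ha1, ha2, ha3, f1, f2, f3, f4⟩ :=
      aux_chain4 p e hp he (by rw [hpe]; norm_num)
    obtain ⟨b1, b2, b3, hb1, hb2, hb3, g1, g2, g3, g4⟩ := aux_chain4 e q he hq heq
    exact ⟨a1, a2, a3, e, b1, b2, b3, ⟨ha1, ha2, ha3, he, hb1, hb2, hb3⟩,
      f1, f2, f3, f4, g1, g2, g3, g4⟩
end geom

open scoped RealInnerProductSpace

section far
variable {F : Type*} [NormedAddCommGroup F] [InnerProductSpace ℝ F]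

lemma aux_sph (u : F → ℝ) (ε ρ α R : ℝ) (hρ0 : 0 < ρ) (hR : ρ ≤ R)
    (hopEst : ∀ a b : F, ‖a - b‖ + 2*ρ ≤ ‖a + b‖ → ‖a - b‖ ≤ 12 * R →
      |u a - u b| ≤ ε * (12*R) ^ α) :
    ∀ w z : F, ‖w‖ = 1 → ‖z‖ = 1 → ‖w - z‖ ≤ 1 →
        |u ((6*R) • w) - u ((6*R) • z)| ≤ ε * (12*R)^α := by
  intro w z hw hz hwz
  have hps : ‖w + z‖^2 = 2 + 2 * ⟪w, z⟫ := by
    have := norm_add_sq_real w z; rw [hw, hz] at this; rw [this]; ring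
  have hms : ‖w - z‖^2 = 2 - 2 * ⟪w, z⟫ := by
    have := norm_sub_sq_real w z; rw [hw, hz] at this; rw [this]; ring
  have hge : (17:ℝ)/10 ≤ ‖w + z‖ := by
    nlinarith [norm_nonneg (w+z), norm_nonneg (w-z)]
  have h6R : (0:ℝ) < 6*R := by linarith
  have A := mul_le_mul_of_nonneg_left hwz h6R.le
  have B := mul_le_mul_of_nonneg_left hge h6R.le
  apply hopEst
  · rw [← smul_sub, ← smul_add, norm_smul, norm_smul, Real.norm_eq_abs,
      abs_of_pos h6R]
    linarith
  · rw [← smul_sub, norm_smul, Real.norm_eq_abs, abs_of_pos h6R]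
    linarith

lemma aux_radial (u : F → ℝ) (ε ρ α R : ℝ) (hρ0 : 0 < ρ) (hR : ρ ≤ R)
    (hopEst : ∀ a b : F, ‖a - b‖ + 2*ρ ≤ ‖a + b‖ → ‖a - b‖ ≤ 12 * R →
      |u a - u b| ≤ ε * (12*R) ^ α) :
    ∀ w : F, 2*ρ ≤ ‖w‖ → ‖w‖ ≤ 6*R →
        |u w - u ((6*R) • (‖w‖⁻¹ • w))| ≤ ε * (12*R)^α := by
  intro w h1 h2
  have hw0 : (0:ℝ) < ‖w‖ := lt_of_lt_of_le (by positivity) h1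
  set lam := (6*R) * ‖w‖⁻¹ with hlam
  have hlamw : lam * ‖w‖ = 6*R := by rw [hlam, mul_assoc, inv_mul_cancel₀ hw0.ne', mul_one]
  have hlam1 : 1 ≤ lam := by
    rw [hlam, ← div_eq_mul_inv]
    exact (one_le_div hw0).2 h2
  have heq : (6*R) • (‖w‖⁻¹ • w) = lam • w := by rw [smul_smul, ← hlam]
  rw [heq]
  have hsub : ‖w - lam • w‖ = (lam - 1) * ‖w‖ := by
    rw [show w - lam • w = (1 - lam) • w by module, norm_smul, Real.norm_eq_abs,
      abs_of_nonpos (by linarith : (1:ℝ) - lam ≤ 0)]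
    ring
  have hadd : ‖w + lam • w‖ = (1 + lam) * ‖w‖ := by
    rw [show w + lam • w = (1 + lam) • w by module, norm_smul, Real.norm_eq_abs,
      abs_of_pos (by linarith : (0:ℝ) < 1 + lam)]
  apply hopEst
  · rw [hsub, hadd]; nlinarith
  · rw [hsub]; nlinarith

lemma aux_far (u : F → ℝ) (M ε ρ α : ℝ)
    (hM : 0 ≤ M) (hε : 0 ≤ ε) (hρ : 1 ≤ ρ) (hα : 0 < α) (hα1 : α ≤ 1)
    (hortho : ∀ p : F, ‖p‖ = 1 → ∃ e : F, ‖e‖ = 1 ∧ ⟪p, e⟫ = 0)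
    (hex : ∃ e : F, ‖e‖ = 1)
    (hGB : ∀ a b : F, |u a - u b| ≤ M * ‖a - b‖ ^ α)
    (hHOP : ∀ a b : F, ‖a - b‖ + 2*ρ ≤ ‖a + b‖ → |u a - u b| ≤ ε * ‖a - b‖ ^ α)
    (x y : F) (hR : ρ ≤ ‖x - y‖) :
    |u x - u y| ≤ 2*M*(8*ρ)^α + 120*ε*‖x - y‖^α := by
  classical
  set R := ‖x - y‖ with hRdef
  have hρ0 : (0:ℝ) < ρ := lt_of_lt_of_le one_pos hρ
  have hR0 : (0:ℝ) < R := lt_of_lt_of_le hρ0 hR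
  have hmono : ∀ s t : ℝ, 0 ≤ s → s ≤ t → s ^ α ≤ t ^ α :=
    fun s t hs hst => Real.rpow_le_rpow hs hst hα.le
  have hRα : (0:ℝ) ≤ R ^ α := Real.rpow_nonneg hR0.le α
  have h8ρα : (0:ℝ) ≤ (8*ρ) ^ α := Real.rpow_nonneg (by positivity) α
  have hopEst : ∀ a b : F, ‖a - b‖ + 2*ρ ≤ ‖a + b‖ → ‖a - b‖ ≤ 12*R →
      |u a - u b| ≤ ε * (12*R) ^ α := fun a b h1 h2 =>
    (hHOP a b h1).trans (mul_le_mul_of_nonneg_left (hmono _ _ (norm_nonneg _) h2) hε)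
  have hfinal : ε * (12*R)^α ≤ 12 * (ε * R ^ α) := by
    have h1 : (12*R)^α = 12^(α:ℝ) * R^α := Real.mul_rpow (by norm_num) hR0.le
    have h2 : (12:ℝ)^(α:ℝ) ≤ 12 := by
      have := Real.rpow_le_rpow_of_exponent_le (by norm_num : (1:ℝ) ≤ 12) hα1
      rwa [Real.rpow_one] at this
    rw [h1]
    nlinarith [mul_nonneg (sub_nonneg.2 h2) (mul_nonneg hε hRα)]
  by_cases hcase : R + 2*ρ ≤ ‖x + y‖
  · have h1 := hHOP x y (by rw [← hRdef]; exact hcase)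
    have h2 : ε * R ^ α ≤ 120*ε*R^α := by nlinarith
    nlinarith
  · push_neg at hcase
    have hxb : ‖x‖ ≤ 2*R := by
      have h2x : (2:ℝ) * ‖x‖ = ‖(x + y) + (x - y)‖ := by
        rw [show (x+y)+(x-y) = (2:ℝ) • x by module, norm_smul, Real.norm_eq_abs]
        norm_num
      have := norm_add_le (x+y) (x-y)
      rw [← h2x, ← hRdef] at this
      linarith
    have hyb : ‖y‖ ≤ 2*R := by
      have h2y : (2:ℝ) * ‖y‖ = ‖(x + y) - (x - y)‖ := by
        rw [show (x+y)-(x-y) = (2:ℝ) • y by module, norm_smul, Real.norm_eq_abs]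
        norm_num
      have := norm_sub_le (x+y) (x-y)
      rw [← h2y, ← hRdef] at this
      linarith
    obtain ⟨e0, he0⟩ := hex
    have key : ∀ w : F, ‖w‖ ≤ 2*R →
        ∃ w₁ : F, ‖w - w₁‖ ≤ 4*ρ ∧ 2*ρ ≤ ‖w₁‖ ∧ ‖w₁‖ ≤ 6*R := by
      intro w hw
      by_cases hc : ‖w‖ < 2*ρ
      · refine ⟨w + (4*ρ) • e0, ?_, ?_, ?_⟩
        · have : w - (w + (4*ρ) • e0) = -((4*ρ) • e0) := by module
          rw [this, norm_neg, norm_smul, Real.norm_eq_abs, he0,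
            abs_of_pos (by positivity : (0:ℝ) < 4*ρ)]
          norm_num
        · have h1 : ‖(4*ρ) • e0‖ ≤ ‖w + (4*ρ) • e0‖ + ‖w‖ := by
            have := norm_sub_le (w + (4*ρ) • e0) w
            simpa using this
          rw [norm_smul, Real.norm_eq_abs, he0,
            abs_of_pos (by positivity : (0:ℝ) < 4*ρ)] at h1
          linarith
        · have h1 := norm_add_le w ((4*ρ) • e0)
          rw [norm_smul, Real.norm_eq_abs, he0,
            abs_of_pos (by positivity : (0:ℝ) < 4*ρ)] at h1
          have : ρ ≤ R := hR
          linarith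
      · push_neg at hc
        exact ⟨w, by simp [hρ0.le], hc, by linarith⟩
    obtain ⟨x₁, hx1d, hx1l, hx1u⟩ := key x hxb
    obtain ⟨y₁, hy1d, hy1l, hy1u⟩ := key y hyb
    have hradial := aux_radial u ε ρ α R hρ0 hR hopEst
    have hsph := aux_sph u ε ρ α R hρ0 hR hopEst
    have hx10 : (0:ℝ) < ‖x₁‖ := lt_of_lt_of_le (by positivity) hx1l
    have hy10 : (0:ℝ) < ‖y₁‖ := lt_of_lt_of_le (by positivity) hy1l
    set ph := ‖x₁‖⁻¹ • x₁ with hph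
    set qh := ‖y₁‖⁻¹ • y₁ with hqh
    have hphu : ‖ph‖ = 1 := by
      rw [hph, norm_smul, Real.norm_eq_abs, abs_of_pos (by positivity : (0:ℝ) < ‖x₁‖⁻¹)]
      field_simp
    have hqhu : ‖qh‖ = 1 := by
      rw [hqh, norm_smul, Real.norm_eq_abs, abs_of_pos (by positivity : (0:ℝ) < ‖y₁‖⁻¹)]
      field_simp
    obtain ⟨c1, c2, c3, c4, c5, c6, c7, ⟨n1, n2, n3, n4, n5, n6, n7⟩,
      d1, d2, d3, d4, d5, d6, d7, d8⟩ := aux_chain9 hortho ph qh hphu hqhu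
    set E := ε * (12*R)^α with hE
    have hE0 : 0 ≤ E := by
      rw [hE]; positivity
    -- bounds for the twelve segments
    have b0 : |u x - u x₁| ≤ M * (8*ρ)^α := by
      refine (hGB x x₁).trans (mul_le_mul_of_nonneg_left ?_ hM)
      exact hmono _ _ (norm_nonneg _) (by linarith)
    have b11 : |u y₁ - u y| ≤ M * (8*ρ)^α := by
      refine (hGB y₁ y).trans (mul_le_mul_of_nonneg_left ?_ hM)
      rw [norm_sub_rev]
      exact hmono _ _ (norm_nonneg _) (by linarith)
    have b1 : |u x₁ - u ((6*R) • ph)| ≤ E := hradial x₁ hx1l hx1u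
    have b10 : |u ((6*R) • qh) - u y₁| ≤ E := by
      rw [abs_sub_comm]; exact hradial y₁ hy1l hy1u
    have s1 : |u ((6*R) • ph) - u ((6*R) • c1)| ≤ E := hsph _ _ hphu n1 d1
    have s2 : |u ((6*R) • c1) - u ((6*R) • c2)| ≤ E := hsph _ _ n1 n2 d2
    have s3 : |u ((6*R) • c2) - u ((6*R) • c3)| ≤ E := hsph _ _ n2 n3 d3
    have s4 : |u ((6*R) • c3) - u ((6*R) • c4)| ≤ E := hsph _ _ n3 n4 d4
    have s5 : |u ((6*R) • c4) - u ((6*R) • c5)| ≤ E := hsph _ _ n4 n5 d5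
    have s6 : |u ((6*R) • c5) - u ((6*R) • c6)| ≤ E := hsph _ _ n5 n6 d6
    have s7 : |u ((6*R) • c6) - u ((6*R) • c7)| ≤ E := hsph _ _ n6 n7 d7
    have s8 : |u ((6*R) • c7) - u ((6*R) • qh)| ≤ E := hsph _ _ n7 hqhu d8
    -- triangle inequalities
    have t0 : |u x - u y| ≤ |u x - u x₁| + |u x₁ - u y| := abs_sub_le _ _ _
    have t1 : |u x₁ - u y| ≤ |u x₁ - u ((6*R) • ph)| + |u ((6*R) • ph) - u y| :=
      abs_sub_le _ _ _
    have t2 : |u ((6*R) • ph) - u y| ≤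
        |u ((6*R) • ph) - u ((6*R) • c1)| + |u ((6*R) • c1) - u y| := abs_sub_le _ _ _
    have t3 : |u ((6*R) • c1) - u y| ≤
        |u ((6*R) • c1) - u ((6*R) • c2)| + |u ((6*R) • c2) - u y| := abs_sub_le _ _ _
    have t4 : |u ((6*R) • c2) - u y| ≤
        |u ((6*R) • c2) - u ((6*R) • c3)| + |u ((6*R) • c3) - u y| := abs_sub_le _ _ _
    have t5 : |u ((6*R) • c3) - u y| ≤
        |u ((6*R) • c3) - u ((6*R) • c4)| + |u ((6*R) • c4) - u y| := abs_sub_le _ _ _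
    have t6 : |u ((6*R) • c4) - u y| ≤
        |u ((6*R) • c4) - u ((6*R) • c5)| + |u ((6*R) • c5) - u y| := abs_sub_le _ _ _
    have t7 : |u ((6*R) • c5) - u y| ≤
        |u ((6*R) • c5) - u ((6*R) • c6)| + |u ((6*R) • c6) - u y| := abs_sub_le _ _ _
    have t8 : |u ((6*R) • c6) - u y| ≤
        |u ((6*R) • c6) - u ((6*R) • c7)| + |u ((6*R) • c7) - u y| := abs_sub_le _ _ _
    have t9 : |u ((6*R) • c7) - u y| ≤
        |u ((6*R) • c7) - u ((6*R) • qh)| + |u ((6*R) • qh) - u y| := abs_sub_le _ _ _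
    have t10 : |u ((6*R) • qh) - u y| ≤
        |u ((6*R) • qh) - u y₁| + |u y₁ - u y| := abs_sub_le _ _ _
    have hsum : |u x - u y| ≤ 2*(M*(8*ρ)^α) + 10*E := by linarith
    have h10E : 10*E ≤ 120*ε*R^α := by linarith [hfinal]
    linarith
end far

open MeasureTheory

section meas
variable {n : ℕ}
local notation "E" => EuclideanSpace ℝ (Fin n)

lemma aux_tail (g : E → ℝ) (hg : ∀ z, 0 ≤ g z) (hgi : Integrable g)
    (κ : ℝ) (hκ : 0 < κ) :
    ∃ ρ : ℝ, 1 ≤ ρ ∧ ∫ z in (Metric.closedBall (0:E) ρ)ᶜ, g z ≤ κ := by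
  have hU : (⋃ j : ℕ, Metric.closedBall (0:E) j) = Set.univ := by
    ext z
    simp only [Set.mem_iUnion, Metric.mem_closedBall, Set.mem_univ, iff_true]
    obtain ⟨j, hj⟩ := exists_nat_ge (dist z 0)
    exact ⟨j, hj⟩
  have hmono := tendsto_setIntegral_of_monotone
    (s := fun j : ℕ => Metric.closedBall (0:E) j)
    (fun j => measurableSet_closedBall)
    (fun i j hij => Metric.closedBall_subset_closedBall (by exact_mod_cast hij))
    (by rw [hU]; exact hgi.integrableOn)
  rw [hU, setIntegral_univ] at hmono
  have hev := hmono.eventually (lt_mem_nhds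
    (show (∫ z, g z) - κ < ∫ z, g z by linarith))
  obtain ⟨j, hj⟩ := hev.exists
  have hsplit := integral_add_compl (measurableSet_closedBall
    (x := (0:E)) (ε := (j:ℝ))) hgi
  refine ⟨max j 1, le_max_right _ _, ?_⟩
  have hsub : (Metric.closedBall (0:E) (max j 1))ᶜ ⊆ (Metric.closedBall (0:E) j)ᶜ :=
    Set.compl_subset_compl.2 (Metric.closedBall_subset_closedBall (le_max_left _ _))
  have h1 : ∫ z in (Metric.closedBall (0:E) (max j 1))ᶜ, g z ≤
      ∫ z in (Metric.closedBall (0:E) j)ᶜ, g z :=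
    setIntegral_mono_set hgi.integrableOn
      (Filter.Eventually.of_forall hg) (HasSubset.Subset.eventuallyLE hsub)
  linarith

lemma aux_small [NeZero n] (g : E → ℝ) (hg : ∀ z, 0 ≤ g z) (hgi : Integrable g)
    (κ : ℝ) (hκ : 0 < κ) :
    ∃ r0 : ℝ, 0 < r0 ∧ ∀ (c : E) (r : ℝ), r ≤ r0 →
      ∫ z in Metric.ball c r, g z ≤ κ := by
  have hfin : (∫⁻ z, ENNReal.ofReal (g z)) ≠ ⊤ := by
    have heq : ∀ z, ENNReal.ofReal (g z) = (‖g z‖₊ : ENNReal) := fun z => by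
      rw [← Real.norm_of_nonneg (hg z), ← enorm_eq_nnnorm, enorm_norm, ofReal_norm]
    rw [lintegral_congr heq]
    exact hgi.2.ne
  obtain ⟨δ, hδ0, hδ⟩ := exists_pos_setLIntegral_lt_of_measure_lt hfin
    (ENNReal.ofReal_pos.2 hκ).ne'
  have hiInter : (⋂ k : ℕ, Metric.ball (0:E) (1/(k+1))) = {(0:E)} := by
    ext z
    simp only [Set.mem_iInter, Metric.mem_ball, Set.mem_singleton_iff, dist_zero_right]
    constructor
    · intro h
      by_contra hz
      have hz' : 0 < ‖z‖ := norm_pos_iff.2 hz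
      obtain ⟨k, hk⟩ := exists_nat_one_div_lt hz'
      exact absurd (h k) (by push_neg; linarith)
    · intro h k
      rw [h]; simp; positivity
  have htend := tendsto_measure_iInter_atTop
    (μ := (volume : Measure E))
    (s := fun k : ℕ => Metric.ball (0:E) (1/(k+1)))
    (fun k => measurableSet_ball.nullMeasurableSet)
    (fun i j hij => Metric.ball_subset_ball (by
      apply one_div_le_one_div_of_le <;> [positivity; exact_mod_cast (by omega : i + 1 ≤ j + 1)]))
    ⟨0, measure_ball_lt_top.ne⟩
  rw [hiInter, measure_singleton] at htend
  obtain ⟨k, hk⟩ := (htend.eventually (gt_mem_nhds hδ0)).exists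
  refine ⟨1/(k+1), by positivity, ?_⟩
  intro c r hr
  have hmeas : volume (Metric.ball c r) < δ := by
    calc volume (Metric.ball c r) = volume (Metric.ball (0:E) r) :=
          Measure.addHaar_ball_center volume c r
    _ ≤ volume (Metric.ball (0:E) (1/(k+1))) := measure_mono (Metric.ball_subset_ball hr)
    _ < δ := hk
  have hlt := hδ _ hmeas
  have heq2 : ∫ z in Metric.ball c r, g z =
      (∫⁻ z in Metric.ball c r, ENNReal.ofReal (g z)).toReal := by
    rw [integral_eq_lintegral_of_nonneg_ae (Filter.Eventually.of_forall hg)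
      hgi.aestronglyMeasurable.restrict]
  rw [heq2]
  exact ENNReal.toReal_le_of_le_ofReal hκ.le hlt.le
end meas

open MeasureTheory
open scoped RealInnerProductSpace

section ortho
variable {n : ℕ}
local notation "E" => EuclideanSpace ℝ (Fin n)

lemma aux_exu (hn : 2 ≤ n) : ∃ e : E, ‖e‖ = 1 := by
  refine ⟨EuclideanSpace.single (⟨0, by omega⟩ : Fin n) (1:ℝ), ?_⟩
  rw [EuclideanSpace.norm_single]
  norm_num

lemma aux_ortho (hn : 2 ≤ n) :
    ∀ p : E, ‖p‖ = 1 → ∃ e : E, ‖e‖ = 1 ∧ ⟪p, e⟫ = 0 := by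
  intro p hp
  set i0 : Fin n := ⟨0, by omega⟩
  set i1 : Fin n := ⟨1, by omega⟩
  have hne : i0 ≠ i1 := by simp [i0, i1, Fin.ext_iff]
  set e0 : E := EuclideanSpace.single i0 (1:ℝ) with he0
  set e1 : E := EuclideanSpace.single i1 (1:ℝ) with he1
  have he0n : ‖e0‖ = 1 := by rw [he0, EuclideanSpace.norm_single]; norm_num
  have he1n : ‖e1‖ = 1 := by rw [he1, EuclideanSpace.norm_single]; norm_num
  have he01 : ⟪e0, e1⟫ = 0 := by
    rw [he0, he1, EuclideanSpace.inner_single_left]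
    simp only [EuclideanSpace.single_apply]
    simp [hne]
  set a : ℝ := ⟪p, e0⟫ with ha
  set b : ℝ := ⟪p, e1⟫ with hb
  set w : E := b • e0 - a • e1 with hw
  have hpw : ⟪p, w⟫ = 0 := by
    rw [hw, inner_sub_right, real_inner_smul_right, real_inner_smul_right, ← ha, ← hb]
    ring
  by_cases hwz : w = 0
  · refine ⟨e0, he0n, ?_⟩
    have hww : ‖w‖^2 = a^2 + b^2 := by
      rw [hw, norm_sub_sq_real, real_inner_smul_left, real_inner_smul_right,
        norm_smul, norm_smul, he01, Real.norm_eq_abs, Real.norm_eq_abs,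
        he0n, he1n]
      rw [mul_pow, mul_pow, sq_abs, sq_abs]
      ring
    rw [hwz, norm_zero] at hww
    have ha0 : a = 0 := by nlinarith
    rw [← ha, ha0]
  · refine ⟨‖w‖⁻¹ • w, ?_, ?_⟩
    · have hw0 : (0:ℝ) < ‖w‖ := norm_pos_iff.2 hwz
      rw [norm_smul, Real.norm_eq_abs, abs_of_pos (by positivity : (0:ℝ) < ‖w‖⁻¹)]
      field_simp
    · rw [real_inner_smul_right, hpw]; ring
end ortho

open MeasureTheory

set_option maxHeartbeats 1000000 in
/-- The `(1 - n/p)`-Hölder ratio of a nonconstant function with `p`-integrable gradient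
satisfying the localized Morrey estimate attains its supremum at a pair of distinct
points. -/
theorem holder_ratio_maximized (n : ℕ) (hn : 2 ≤ n) (p : ℝ) (hp : (n : ℝ) < p)
    (C : ℝ) (hC : 0 < C)
    (u : EuclideanSpace ℝ (Fin n) → ℝ) (hu : Differentiable ℝ u)
    (hnc : ∃ a b : EuclideanSpace ℝ (Fin n), u a ≠ u b)
    (hui : Integrable (fun x => ‖gradient u x‖ ^ p))
    (hM : ∀ x y : EuclideanSpace ℝ (Fin n),
      |u x - u y| ≤ C * ‖x - y‖ ^ (1 - (n : ℝ) / p) *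
        (∫ z in Metric.ball (((1 : ℝ) / 2) • (x + y)) (‖x - y‖ / 2),
          ‖gradient u z‖ ^ p) ^ (1 / p)) :
    ∃ x0 y0 : EuclideanSpace ℝ (Fin n), x0 ≠ y0 ∧
      ∀ x y : EuclideanSpace ℝ (Fin n), x ≠ y →
        |u x - u y| / ‖x - y‖ ^ (1 - (n : ℝ) / p) ≤
          |u x0 - u y0| / ‖x0 - y0‖ ^ (1 - (n : ℝ) / p) := by
  classical
  haveI : NeZero n := ⟨by omega⟩
  have hn2 : (2:ℝ) ≤ (n:ℝ) := by exact_mod_cast hn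
  have hp0 : (0:ℝ) < p := by linarith
  set α := 1 - (n:ℝ)/p with hαdef
  have hα : 0 < α := by
    have h1 : (n:ℝ)/p < 1 := (div_lt_one hp0).2 hp
    rw [hαdef]; linarith
  have hα1 : α ≤ 1 := by
    have h1 : 0 ≤ (n:ℝ)/p := by positivity
    rw [hαdef]; linarith
  obtain ⟨g, hgdef⟩ : ∃ f : EuclideanSpace ℝ (Fin n) → ℝ,
      f = fun z => ‖gradient u z‖ ^ p := ⟨_, rfl⟩
  rw [← hgdef] at hui hM
  have hg : ∀ z, 0 ≤ g z := fun z => by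
    rw [hgdef]; exact Real.rpow_nonneg (norm_nonneg _) p
  obtain ⟨I, hIdef⟩ : ∃ r : ℝ, r = ∫ z, g z := ⟨_, rfl⟩
  have hI0 : 0 ≤ I := by rw [hIdef]; exact integral_nonneg hg
  -- the basic Morrey-type bound, with any upper bound for the local energy
  have hBND : ∀ x y : EuclideanSpace ℝ (Fin n), ∀ τ : ℝ,
      (∫ z in Metric.ball (((1:ℝ)/2) • (x + y)) (‖x - y‖/2), g z) ≤ τ →
      |u x - u y| ≤ (C * τ ^ (1/p)) * ‖x - y‖ ^ α := by
    intro x y τ hτ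
    refine (hM x y).trans ?_
    have hnn : 0 ≤ ∫ z in Metric.ball (((1:ℝ)/2) • (x + y)) (‖x - y‖/2), g z :=
      setIntegral_nonneg measurableSet_ball (fun z _ => hg z)
    have h1 : (∫ z in Metric.ball (((1:ℝ)/2) • (x + y)) (‖x - y‖/2), g z) ^ (1/p)
        ≤ τ ^ (1/p) := Real.rpow_le_rpow hnn hτ (by positivity)
    have h2 : 0 ≤ C * ‖x - y‖ ^ α := by positivity
    calc C * ‖x - y‖ ^ α * (∫ z in Metric.ball (((1:ℝ)/2) • (x + y)) (‖x - y‖/2), g z) ^ (1/p)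
        ≤ C * ‖x - y‖ ^ α * τ ^ (1/p) := mul_le_mul_of_nonneg_left h1 h2
      _ = (C * τ ^ (1/p)) * ‖x - y‖ ^ α := by ring
  set M := C * I ^ ((1:ℝ)/p) with hMdef
  have hM0 : 0 ≤ M := mul_nonneg hC.le (Real.rpow_nonneg hI0 _)
  have hGB : ∀ a b : EuclideanSpace ℝ (Fin n), |u a - u b| ≤ M * ‖a - b‖ ^ α := by
    intro a b
    refine hBND a b I ?_
    rw [hIdef]
    exact setIntegral_le_integral hui (Filter.Eventually.of_forall hg)
  -- turning a bound on the energy into a bound on the constant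
  have hκch : ∀ β : ℝ, 0 < β → ∀ τ : ℝ, 0 ≤ τ → τ ≤ (β/C) ^ p → C * τ ^ (1/p) ≤ β := by
    intro β hβ τ hτ0 hτ
    have h1 : τ ^ (1/p) ≤ ((β/C)^p) ^ (1/p) := Real.rpow_le_rpow hτ0 hτ (by positivity)
    have h2 : ((β/C)^p)^((1:ℝ)/p) = β/C := by
      rw [← Real.rpow_mul (by positivity : (0:ℝ) ≤ β/C), mul_one_div_cancel hp0.ne',
        Real.rpow_one]
    rw [h2] at h1
    calc C * τ^((1:ℝ)/p) ≤ C * (β/C) := mul_le_mul_of_nonneg_left h1 hC.le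
      _ = β := by field_simp
  -- the witness pair coming from nonconstancy
  obtain ⟨a, b, hab⟩ := hnc
  have haneb : a ≠ b := fun h => hab (by rw [h])
  have hab0 : (0:ℝ) < ‖a - b‖ := by
    rw [norm_pos_iff]; exact sub_ne_zero.2 haneb
  set θ := |u a - u b| / ‖a - b‖ ^ α with hθ
  have hθ0 : 0 < θ := by
    rw [hθ]
    exact div_pos (abs_pos.2 (sub_ne_zero.2 hab)) (Real.rpow_pos_of_pos hab0 α)
  -- FAR REGIME
  obtain ⟨ρf, hρf1, hρftail⟩ := aux_tail g hg hui ((θ/480/C)^p) (by positivity)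
  have hρf0 : (0:ℝ) < ρf := by linarith
  have hHOPf : ∀ x y : EuclideanSpace ℝ (Fin n), ‖x - y‖ + 2*ρf ≤ ‖x + y‖ →
      |u x - u y| ≤ (θ/480) * ‖x - y‖^α := by
    intro x y hxy
    have hsub : Metric.ball (((1:ℝ)/2) • (x + y)) (‖x - y‖/2) ⊆
        (Metric.closedBall (0:EuclideanSpace ℝ (Fin n)) ρf)ᶜ := by
      intro z hz
      simp only [Metric.mem_ball, Metric.mem_closedBall, Set.mem_compl_iff, not_le] at *
      have hmid : ‖((1:ℝ)/2) • (x + y)‖ = ‖x + y‖/2 := by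
        rw [norm_smul, Real.norm_eq_abs, abs_of_pos (by norm_num : (0:ℝ) < 1/2)]
        ring
      have h1 : dist (((1:ℝ)/2) • (x + y)) (0:EuclideanSpace ℝ (Fin n)) ≤
          dist (((1:ℝ)/2) • (x + y)) z + dist z 0 := dist_triangle _ _ _
      rw [dist_zero_right, hmid, dist_comm] at h1
      have h2 := hz
      linarith
    have hint : (∫ z in Metric.ball (((1:ℝ)/2) • (x + y)) (‖x - y‖/2), g z) ≤
        (θ/480/C)^p := by
      refine le_trans ?_ hρftail
      exact setIntegral_mono_set hui.integrableOn (Filter.Eventually.of_forall hg)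
        (HasSubset.Subset.eventuallyLE hsub)
    refine (hBND x y _ hint).trans ?_
    have := hκch (θ/480) (by positivity) ((θ/480/C)^p) (by positivity) le_rfl
    exact mul_le_mul_of_nonneg_right this (Real.rpow_nonneg (norm_nonneg _) α)
  have hFAR : ∀ x y : EuclideanSpace ℝ (Fin n), ρf ≤ ‖x - y‖ →
      |u x - u y| ≤ 2*M*(8*ρf)^α + 120*(θ/480)*‖x - y‖^α :=
    fun x y h => aux_far u M (θ/480) ρf α hM0 (by positivity) hρf1 hα hα1
      (aux_ortho hn) (aux_exu hn) hGB hHOPf x y h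
  set B := (8*M*(8*ρf)^α/θ + 1) with hB
  have hB0 : 0 ≤ 8*M*(8*ρf)^α/θ := by positivity
  have hB1 : (1:ℝ) ≤ B := by rw [hB]; linarith
  set R1 := max ρf (B ^ ((1:ℝ)/α)) with hR1
  have hR1ρ : ρf ≤ R1 := le_max_left _ _
  have hR10 : 0 < R1 := lt_of_lt_of_le hρf0 hR1ρ
  have hR1B : 2*M*(8*ρf)^α ≤ (θ/4) * R1^α := by
    have h1 : B ^ ((1:ℝ)/α) ≤ R1 := le_max_right _ _
    have h2 : (B^((1:ℝ)/α))^α ≤ R1^α :=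
      Real.rpow_le_rpow (Real.rpow_nonneg (by linarith) _) h1 hα.le
    have h3 : (B^((1:ℝ)/α))^α = B := by
      rw [← Real.rpow_mul (by linarith : (0:ℝ) ≤ B), one_div_mul_cancel hα.ne',
        Real.rpow_one]
    rw [h3] at h2
    have h4 : (θ/4)*B ≤ (θ/4)*R1^α := mul_le_mul_of_nonneg_left h2 (by positivity)
    have h5 : (θ/4)*B = 2*M*(8*ρf)^α + θ/4 := by
      rw [hB]; field_simp; ring
    linarith
  have hfarQ : ∀ x y : EuclideanSpace ℝ (Fin n), x ≠ y → R1 ≤ ‖x-y‖ →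
      |u x - u y| / ‖x-y‖^α ≤ θ/2 := by
    intro x y hne hR
    have hxy0 : (0:ℝ) < ‖x-y‖ := by rw [norm_pos_iff]; exact sub_ne_zero.2 hne
    have hRα : (0:ℝ) < ‖x-y‖^α := Real.rpow_pos_of_pos hxy0 α
    rw [div_le_iff₀ hRα]
    have h1 := hFAR x y (le_trans hR1ρ hR)
    have h2 : R1^α ≤ ‖x-y‖^α := Real.rpow_le_rpow hR10.le hR hα.le
    have h3 : (θ/4)*R1^α ≤ (θ/4)*‖x-y‖^α := mul_le_mul_of_nonneg_left h2 (by positivity)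
    have h4 : (120:ℝ)*(θ/480) = θ/4 := by ring
    nlinarith
  -- NEAR REGIME
  obtain ⟨r0, hr00, hsmall⟩ := aux_small g hg hui ((θ/2/C)^p) (by positivity)
  have hnearQ : ∀ x y : EuclideanSpace ℝ (Fin n), x ≠ y → ‖x-y‖ ≤ r0 →
      |u x - u y| / ‖x-y‖^α ≤ θ/2 := by
    intro x y hne hR
    have hxy0 : (0:ℝ) < ‖x-y‖ := by rw [norm_pos_iff]; exact sub_ne_zero.2 hne
    have hRα : (0:ℝ) < ‖x-y‖^α := Real.rpow_pos_of_pos hxy0 α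
    rw [div_le_iff₀ hRα]
    have hint : (∫ z in Metric.ball (((1:ℝ)/2) • (x + y)) (‖x - y‖/2), g z) ≤
        (θ/2/C)^p := hsmall _ _ (by linarith)
    refine (hBND x y _ hint).trans ?_
    have := hκch (θ/2) (by positivity) ((θ/2/C)^p) (by positivity) le_rfl
    exact mul_le_mul_of_nonneg_right this (Real.rpow_nonneg (norm_nonneg _) α)
  -- MIDDLE REGIME, CENTER FAR AWAY
  obtain ⟨ρt, hρt1, hρttail⟩ := aux_tail g hg hui ((θ/2/C)^p) (by positivity)
  set ρ1 := ρt + 2*R1 with hρ1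
  have hmidQ : ∀ x y : EuclideanSpace ℝ (Fin n), x ≠ y → ‖x-y‖ ≤ R1 → ρ1 ≤ ‖x‖ →
      |u x - u y| / ‖x-y‖^α ≤ θ/2 := by
    intro x y hne hR hx
    have hxy0 : (0:ℝ) < ‖x-y‖ := by rw [norm_pos_iff]; exact sub_ne_zero.2 hne
    have hRα : (0:ℝ) < ‖x-y‖^α := Real.rpow_pos_of_pos hxy0 α
    rw [div_le_iff₀ hRα]
    have hsub : Metric.ball (((1:ℝ)/2) • (x + y)) (‖x - y‖/2) ⊆
        (Metric.closedBall (0:EuclideanSpace ℝ (Fin n)) ρt)ᶜ := by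
      intro z hz
      simp only [Metric.mem_ball] at hz
      simp only [Set.mem_compl_iff, Metric.mem_closedBall, not_le]
      have hxm : dist x (((1:ℝ)/2) • (x + y)) = ‖x - y‖/2 := by
        rw [dist_eq_norm, show x - ((1:ℝ)/2) • (x + y) = ((1:ℝ)/2) • (x - y) by module,
          norm_smul, Real.norm_eq_abs, abs_of_pos (by norm_num : (0:ℝ) < 1/2)]
        ring
      have h1 : dist x (0:EuclideanSpace ℝ (Fin n)) ≤
          dist x (((1:ℝ)/2) • (x + y)) + dist (((1:ℝ)/2) • (x + y)) z + dist z 0 :=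
        dist_triangle4 _ _ _ _
      rw [dist_zero_right, hxm, dist_comm (((1:ℝ)/2) • (x + y)) z] at h1
      have h2 : ρ1 = ρt + 2*R1 := hρ1
      linarith
    have hint : (∫ z in Metric.ball (((1:ℝ)/2) • (x + y)) (‖x - y‖/2), g z) ≤
        (θ/2/C)^p := by
      refine le_trans ?_ hρttail
      exact setIntegral_mono_set hui.integrableOn (Filter.Eventually.of_forall hg)
        (HasSubset.Subset.eventuallyLE hsub)
    refine (hBND x y _ hint).trans ?_
    have := hκch (θ/2) (by positivity) ((θ/2/C)^p) (by positivity) le_rfl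
    exact mul_le_mul_of_nonneg_right this (Real.rpow_nonneg (norm_nonneg _) α)
  -- THE COMPACT SET
  set K : Set (EuclideanSpace ℝ (Fin n) × EuclideanSpace ℝ (Fin n)) :=
    {z | ‖z.1‖ ≤ ρ1 ∧ r0 ≤ ‖z.1 - z.2‖ ∧ ‖z.1 - z.2‖ ≤ R1} with hK
  have hOUT : ∀ x y : EuclideanSpace ℝ (Fin n), x ≠ y → (x,y) ∉ K →
      |u x - u y| / ‖x-y‖^α ≤ θ/2 := by
    intro x y hne hKm
    by_cases h1 : ‖x-y‖ ≤ r0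
    · exact hnearQ x y hne h1
    push_neg at h1
    by_cases h2 : R1 ≤ ‖x-y‖
    · exact hfarQ x y hne h2
    push_neg at h2
    have h3 : ¬ ‖x‖ ≤ ρ1 := fun hc => hKm ⟨hc, h1.le, h2.le⟩
    exact hmidQ x y hne h2.le (le_of_not_ge h3)
  have habK : (a,b) ∈ K := by
    by_contra hc
    have h1 : θ ≤ θ/2 := hθ.le.trans (hOUT a b haneb hc)
    linarith
  have hKclosed : IsClosed K := by
    have h1 : IsClosed {z : EuclideanSpace ℝ (Fin n) × EuclideanSpace ℝ (Fin n) |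
        ‖z.1‖ ≤ ρ1} := isClosed_le continuous_fst.norm continuous_const
    have h2 : IsClosed {z : EuclideanSpace ℝ (Fin n) × EuclideanSpace ℝ (Fin n) |
        r0 ≤ ‖z.1 - z.2‖} :=
      isClosed_le continuous_const (continuous_fst.sub continuous_snd).norm
    have h3 : IsClosed {z : EuclideanSpace ℝ (Fin n) × EuclideanSpace ℝ (Fin n) |
        ‖z.1 - z.2‖ ≤ R1} :=
      isClosed_le (continuous_fst.sub continuous_snd).norm continuous_const
    have : K = {z : EuclideanSpace ℝ (Fin n) × EuclideanSpace ℝ (Fin n) | ‖z.1‖ ≤ ρ1} ∩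
        ({z | r0 ≤ ‖z.1 - z.2‖} ∩ {z | ‖z.1 - z.2‖ ≤ R1}) := by
      ext z; simp [hK, Set.mem_inter_iff, and_assoc]
    rw [this]
    exact h1.inter (h2.inter h3)
  have hKcomp : IsCompact K := by
    apply Metric.isCompact_of_isClosed_isBounded hKclosed
    apply Bornology.IsBounded.subset (Metric.isBounded_closedBall
      (x := ((0,0) : EuclideanSpace ℝ (Fin n) × EuclideanSpace ℝ (Fin n))) (r := ρ1 + R1))
    intro z hz
    obtain ⟨hz1, hz2, hz3⟩ := hz
    have hz4 : ‖z.2‖ ≤ ρ1 + R1 := by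
      have : z.2 = z.1 - (z.1 - z.2) := by module
      rw [this]
      have := norm_sub_le z.1 (z.1 - z.2)
      linarith
    rw [Metric.mem_closedBall, Prod.dist_eq]
    have hρ10 : 0 ≤ ρ1 := by
      have : (1:ℝ) ≤ ρt := hρt1
      rw [hρ1]; linarith
    simp only [dist_zero_right]
    exact max_le (by linarith) hz4
  have hQcont : ContinuousOn
      (fun z : EuclideanSpace ℝ (Fin n) × EuclideanSpace ℝ (Fin n) =>
        |u z.1 - u z.2| / ‖z.1 - z.2‖^α) K := by
    have hc1 : Continuous fun z : EuclideanSpace ℝ (Fin n) × EuclideanSpace ℝ (Fin n) =>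
        |u z.1 - u z.2| :=
      ((hu.continuous.comp continuous_fst).sub (hu.continuous.comp continuous_snd)).abs
    have hc2 : Continuous fun z : EuclideanSpace ℝ (Fin n) × EuclideanSpace ℝ (Fin n) =>
        ‖z.1 - z.2‖^α :=
      Continuous.rpow_const (continuous_fst.sub continuous_snd).norm (fun z => Or.inr hα.le)
    refine hc1.continuousOn.div hc2.continuousOn ?_
    intro z hz
    exact (Real.rpow_pos_of_pos (lt_of_lt_of_le hr00 hz.2.1) α).ne'
  obtain ⟨z0, hz0K, hz0max⟩ := hKcomp.exists_isMaxOn ⟨(a,b), habK⟩ hQcont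
  refine ⟨z0.1, z0.2, ?_, ?_⟩
  · intro h
    have h1 := hz0K.2.1
    rw [h, sub_self, norm_zero] at h1
    linarith
  · intro x y hxy
    by_cases hmem : (x,y) ∈ K
    · exact hz0max hmem
    · have h1 := hOUT x y hxy hmem
      have h2 : θ ≤ |u z0.1 - u z0.2| / ‖z0.1 - z0.2‖ ^ α := hθ.le.trans (hz0max habK)
      have h3 : θ/2 ≤ θ := by linarith
      exact le_trans h1 (le_trans h3 h2)
end

section
/- Let 1 < p < ∞, let g : ℝ → ℝ be measurable with ∫_ℝ |g(t)|^p dt < ∞, and let u : ℝ → ℝ be nonconstant and satisfy u(x) − u(y) = ∫_y^x g(t) dt for all y ≤ x. Then the (1−1/p)-Hölder ratio of u attains its supremum: there exist x0, y0 ∈ ℝ with x0 ≠ y0 such that for all x ≠ y, |u(x) − u(y)|/|x − y|^{1−1/p} ≤ |u(x0) − u(y0)|/|x0 − y0|^{1−1/p}. -/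
open MeasureTheory

open Set Filter

set_option maxHeartbeats 1000000

private lemma holder_aux {p : ℝ} (hp : 1 < p) {g : ℝ → ℝ} (hg : Measurable g)
    (hgp : Integrable (fun t => |g t| ^ p)) {y x : ℝ} (hyx : y ≤ x) :
    |∫ t in Set.Ioc y x, g t| ≤
      (∫ t in Set.Ioc y x, |g t| ^ p) ^ (1/p) * (x - y) ^ (1 - 1/p) := by
  have hp0 : 0 < p := lt_trans one_pos hp
  have hpq : p.HolderConjugate (Real.conjExponent p) := Real.HolderConjugate.conjExponent hp
  set q := Real.conjExponent p with hqdef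
  set μ := volume.restrict (Set.Ioc y x) with hμ
  haveI : IsFiniteMeasure μ := ⟨by rw [Measure.restrict_apply_univ]; exact measure_Ioc_lt_top⟩
  have h0 : ENNReal.ofReal p ≠ 0 := by simp [ENNReal.ofReal_eq_zero, not_le, hp0]
  have ht : ENNReal.ofReal p ≠ ⊤ := ENNReal.ofReal_ne_top
  have hmemg : MemLp g (ENNReal.ofReal p) μ := by
    refine (memLp_norm_rpow_iff (hg.aestronglyMeasurable.restrict) h0 ht).mp ?_
    rw [ENNReal.toReal_ofReal hp0.le, ENNReal.div_self h0 ht, memLp_one_iff_integrable]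
    simpa [Real.norm_eq_abs] using hgp.restrict (s := Set.Ioc y x)
  have hmem1 : MemLp (fun _ : ℝ => (1:ℝ)) (ENNReal.ofReal q) μ := memLp_const 1
  have H := integral_mul_norm_le_Lp_mul_Lq (μ := μ) hpq hmemg hmem1
  simp only [norm_one, mul_one, Real.norm_eq_abs, Real.one_rpow] at H
  have hμ1 : ∫ _a, (1:ℝ) ∂μ = x - y := by
    simp [hμ, Real.volume_Ioc, ENNReal.toReal_ofReal (sub_nonneg.2 hyx), hyx]
  rw [hμ1] at H
  have habs : |∫ t in Set.Ioc y x, g t| ≤ ∫ t in Set.Ioc y x, |g t| := by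
    simpa [Real.norm_eq_abs] using
      norm_integral_le_integral_norm (μ := μ) (f := g)
  have hq1 : 1/q = 1 - 1/p := by
    rw [one_div, one_div, ← hpq.one_sub_inv]
  calc |∫ t in Set.Ioc y x, g t| ≤ ∫ t in Set.Ioc y x, |g t| := habs
    _ ≤ (∫ t in Set.Ioc y x, |g t| ^ p) ^ (1/p) * (x - y) ^ (1/q) := H
    _ = _ := by rw [hq1]

private lemma uac_aux {f : ℝ → ℝ} (hm : Measurable f) (h0 : ∀ t, 0 ≤ f t)
    (hi : Integrable f) {ε : ℝ} (hε : 0 < ε) :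
    ∃ δ > 0, ∀ s : Set ℝ, MeasurableSet s → volume s ≤ ENNReal.ofReal δ →
      ∫ t in s, f t ≤ ε := by
  have hlint : ∫⁻ t, ENNReal.ofReal (f t) ≠ ⊤ := by
    have h := hi.hasFiniteIntegral
    rw [hasFiniteIntegral_iff_norm] at h
    refine ne_of_lt (lt_of_le_of_lt (le_of_eq ?_) h)
    exact lintegral_congr fun t => by rw [Real.norm_eq_abs, abs_of_nonneg (h0 t)]
  obtain ⟨δ, hδ0, hδ⟩ := exists_pos_setLIntegral_lt_of_measure_lt hlint
    (ENNReal.ofReal_pos.mpr hε).ne'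
  obtain ⟨r, hr0, hrδ⟩ := exists_between hδ0
  refine ⟨r.toReal, ENNReal.toReal_pos hr0.ne' hrδ.ne_top, fun s hs hvs => ?_⟩
  have h1 : volume s < δ :=
    lt_of_le_of_lt (hvs.trans_eq (ENNReal.ofReal_toReal hrδ.ne_top)) hrδ
  have h2 := hδ s h1
  rw [integral_eq_lintegral_of_nonneg_ae (Filter.Eventually.of_forall fun t => h0 t)
    (hm.aestronglyMeasurable.restrict)]
  exact ENNReal.toReal_le_of_le_ofReal hε.le h2.le

private lemma tail_aux {f : ℝ → ℝ} (h0 : ∀ t, 0 ≤ f t) (hi : Integrable f) {ε : ℝ}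
    (hε : 0 < ε) :
    ∃ N : ℕ, ∫ t in (Set.Icc (-(N:ℝ)) N)ᶜ, f t ≤ ε := by
  have hmono : Monotone (fun n : ℕ => Set.Icc (-(n:ℝ)) n) := by
    intro m n h
    apply Set.Icc_subset_Icc
    · exact neg_le_neg (by exact_mod_cast h)
    · exact_mod_cast h
  have hU : ⋃ n : ℕ, Set.Icc (-(n:ℝ)) n = Set.univ := by
    ext t
    simp only [Set.mem_iUnion, Set.mem_univ, iff_true, Set.mem_Icc]
    obtain ⟨n, hn⟩ := exists_nat_ge |t|
    obtain ⟨h1, h2⟩ := abs_le.mp hn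
    exact ⟨n, h1, h2⟩
  have htend := tendsto_setIntegral_of_monotone (μ := volume) (f := f)
    (fun n : ℕ => measurableSet_Icc) hmono (by rw [hU]; exact hi.integrableOn)
  rw [hU, setIntegral_univ] at htend
  have hev : ∀ᶠ n : ℕ in atTop, (∫ t, f t) - ε < ∫ t in Set.Icc (-(n:ℝ)) n, f t :=
    htend.eventually (eventually_gt_nhds (by linarith))
  obtain ⟨N, hN⟩ := hev.exists
  refine ⟨N, ?_⟩
  have hsplit := integral_add_compl (measurableSet_Icc (a := -(N:ℝ)) (b := (N:ℝ))) hi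
  linarith

/-- In one dimension, the `(1 - 1/p)`-Hölder ratio of a nonconstant function `u` with
integral representation `u x - u y = ∫_y^x g` (where `|g|^p` is integrable) attains its
supremum at a pair of distinct points. -/
theorem holder_ratio_maximized_one_dim (p : ℝ) (hp : 1 < p)
    (g : ℝ → ℝ) (hg : Measurable g)
    (hgp : Integrable (fun t => |g t| ^ p))
    (u : ℝ → ℝ) (hnc : ∃ a b : ℝ, u a ≠ u b)
    (hu : ∀ x y : ℝ, y ≤ x → u x - u y = ∫ t in y..x, g t) :
    ∃ x0 y0 : ℝ, x0 ≠ y0 ∧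
      ∀ x y : ℝ, x ≠ y →
        |u x - u y| / |x - y| ^ (1 - 1 / p) ≤
          |u x0 - u y0| / |x0 - y0| ^ (1 - 1 / p) := by
  obtain ⟨a, b, hab⟩ := hnc
  have hp0 : 0 < p := lt_trans one_pos hp
  set α : ℝ := 1 - 1 / p with hαdef
  have hα0 : 0 < α := by
    have : 1 / p < 1 := by rw [div_lt_one hp0]; exact hp
    simp only [hαdef]; linarith
  -- interval integrability of g
  have hgint : ∀ a b : ℝ, IntervalIntegrable g volume a b := by
    intro a b
    rw [intervalIntegrable_iff]
    have hfin : volume (Set.uIoc a b) < ⊤ := by rw [Set.uIoc]; exact measure_Ioc_lt_top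
    refine Integrable.mono' (g := fun t => 1 + |g t| ^ p)
      ((integrableOn_const hfin.ne).add hgp.integrableOn)
      (hg.aestronglyMeasurable.restrict) ?_
    refine Filter.Eventually.of_forall fun t => ?_
    rw [Real.norm_eq_abs]
    show |g t| ≤ 1 + |g t| ^ p
    rcases le_total (|g t|) 1 with h | h
    · have : (0:ℝ) ≤ |g t| ^ p := Real.rpow_nonneg (abs_nonneg _) _
      linarith
    · have h2 : |g t| ^ (1:ℝ) ≤ |g t| ^ p := Real.rpow_le_rpow_of_exponent_le h (le_of_lt hp)
      rw [Real.rpow_one] at h2; linarith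
  -- u difference in both directions, continuity of u
  have huu : ∀ x y : ℝ, u x - u y = ∫ t in y..x, g t := by
    intro x y
    rcases le_total y x with h | h
    · exact hu x y h
    · have h1 := hu y x h
      rw [intervalIntegral.integral_symm]
      linarith
  have hcontu : Continuous u := by
    have hrep : u = fun x => (∫ t in (0:ℝ)..x, g t) + u 0 := by
      funext x
      have := huu x 0
      linarith
    rw [hrep]
    exact (intervalIntegral.continuous_primitive (fun a b => hgint a b) 0).add continuous_const
  -- base pair
  have hab' : a ≠ b := fun h => hab (congrArg u h)
  set x1 := max a b with hx1
  set y1 := min a b with hy1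
  have hy1x1 : y1 < x1 := min_lt_max.mpr hab'
  have hux1y1 : u x1 ≠ u y1 := by
    rcases le_total a b with h | h
    · rw [hx1, hy1, max_eq_right h, min_eq_left h]; exact fun hh => hab hh.symm
    · rw [hx1, hy1, max_eq_left h, min_eq_right h]; exact hab
  -- the ratio function
  set F : ℝ × ℝ → ℝ := fun z => |u z.1 - u z.2| / (z.1 - z.2) ^ α with hF
  set S0 : ℝ := F (x1, y1) with hS0
  have hS0pos : 0 < S0 := by
    refine div_pos (abs_pos.mpr (sub_ne_zero.mpr hux1y1)) ?_
    exact Real.rpow_pos_of_pos (sub_pos.2 hy1x1) α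
  -- constants
  set κ : ℝ := (1/2 : ℝ) ^ α with hκ
  have hκ0 : 0 < κ := Real.rpow_pos_of_pos (by norm_num) α
  have hκ1 : κ < 1 := Real.rpow_lt_one (by norm_num) (by norm_num) hα0
  set ε : ℝ := S0 * (1 - κ) / 4 with hε
  have hεpos : 0 < ε := by
    have : 0 < 1 - κ := by linarith
    positivity
  have hεppos : 0 < ε ^ p := Real.rpow_pos_of_pos hεpos p
  have habs_meas : Measurable fun t => |g t| ^ p :=
    (Real.continuous_rpow_const hp0.le).measurable.comp hg.abs
  have habs_nonneg : ∀ t, (0:ℝ) ≤ |g t| ^ p := fun t => Real.rpow_nonneg (abs_nonneg _) _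
  obtain ⟨δ0, hδ00, hδ0⟩ := uac_aux habs_meas habs_nonneg hgp hεppos
  set δ' : ℝ := min δ0 (x1 - y1) with hδ'
  have hδ'0 : 0 < δ' := lt_min hδ00 (sub_pos.2 hy1x1)
  have hδ'le : δ' ≤ δ0 := min_le_left _ _
  obtain ⟨N, hN⟩ := tail_aux habs_nonneg hgp hεppos
  set T : ℝ := (N:ℝ) + 1 with hT
  have hT0 : 0 < T := by positivity
  set A : ℝ := T + δ' with hA
  have hTA : T ≤ A := by simp only [hA]; linarith
  have hA0 : 0 < A := by linarith
  set D0 : ℝ := |u A - u (-A)| with hD0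
  set E : ℝ := max (D0 / ε) 1 with hE
  have hE1 : (1:ℝ) ≤ E := le_max_right _ _
  set C : ℝ := max (3*A + |x1| + |y1|) (E ^ (p/(p-1))) with hC
  have hC3A : 3*A ≤ C := by
    refine le_trans ?_ (le_max_left _ _)
    have := abs_nonneg x1; have := abs_nonneg y1; linarith
  have hCx1 : |x1| ≤ C := by
    refine le_trans ?_ (le_max_left _ _)
    have := abs_nonneg y1; linarith
  have hCy1 : |y1| ≤ C := by
    refine le_trans ?_ (le_max_left _ _)
    have := abs_nonneg x1; linarith
  have hAC : A ≤ C := by linarith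
  have hTC : T ≤ C := by linarith
  have hC0 : 0 < C := by linarith
  have hCd : D0 ≤ ε * (C + A) ^ α := by
    have hE0 : (0:ℝ) ≤ E := by linarith
    have hEC : E ^ (p/(p-1)) ≤ C + A := le_trans (le_max_right _ _) (by linarith)
    have h1 : (E ^ (p/(p-1))) ^ α ≤ (C+A) ^ α :=
      Real.rpow_le_rpow (Real.rpow_nonneg hE0 _) hEC hα0.le
    have h2 : (E ^ (p/(p-1))) ^ α = E := by
      rw [← Real.rpow_mul hE0]
      have hexp : p/(p-1) * α = 1 := by
        simp only [hαdef]
        have hp1 : p - 1 ≠ 0 := by intro h; rw [sub_eq_zero] at h; exact (ne_of_gt hp) h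
        field_simp
      rw [hexp, Real.rpow_one]
    have h3 : D0 / ε ≤ (C+A) ^ α := le_trans (le_max_left _ _) (h2 ▸ h1)
    rw [mul_comm]
    exact (div_le_iff₀ hεpos).mp h3
  -- compact set and maximum
  set K : Set (ℝ × ℝ) := (Set.Icc (-C) C ×ˢ Set.Icc (-C) C) ∩ {z : ℝ × ℝ | δ' ≤ z.1 - z.2}
    with hK
  have hKcomp : IsCompact K := by
    refine (isCompact_Icc.prod isCompact_Icc).inter_right ?_
    exact isClosed_le continuous_const (continuous_fst.sub continuous_snd)
  have hmemK : (x1, y1) ∈ K := by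
    constructor
    · constructor
      · exact ⟨neg_le_of_abs_le hCx1, le_of_abs_le hCx1⟩
      · exact ⟨neg_le_of_abs_le hCy1, le_of_abs_le hCy1⟩
    · show δ' ≤ x1 - y1
      exact min_le_right _ _
  have hFcont : ContinuousOn F K := by
    refine ContinuousOn.div
      (((hcontu.comp continuous_fst).sub (hcontu.comp continuous_snd)).abs.continuousOn) ?_ ?_
    · exact ContinuousOn.rpow_const (continuous_fst.sub continuous_snd).continuousOn
        (fun z _ => Or.inr hα0.le)
    · intro z hz
      exact ne_of_gt (Real.rpow_pos_of_pos (lt_of_lt_of_le hδ'0 hz.2) α)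
  obtain ⟨z0, hz0K, hz0max0⟩ := hKcomp.exists_isMaxOn ⟨(x1, y1), hmemK⟩ hFcont
  have hz0max : ∀ z ∈ K, F z ≤ F z0 := fun z hz => hz0max0 hz
  set M : ℝ := F z0 with hM
  have hS0M : S0 ≤ M := hz0max (x1, y1) hmemK
  have hMpos : 0 < M := lt_of_lt_of_le hS0pos hS0M
  have hz0gap : δ' ≤ z0.1 - z0.2 := hz0K.2
  clear_value α S0 κ ε δ' T A D0 E C K M F
  -- box estimate
  have KM : ∀ x' y' : ℝ, -C ≤ y' → y' ≤ C → -C ≤ x' → x' ≤ C → δ' ≤ x' - y' →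
      |u x' - u y'| ≤ M * (x' - y') ^ α := by
    intro x' y' h1 h2 h3 h4 h5
    have hmem : (x', y') ∈ K := by rw [hK]; exact ⟨⟨⟨h3, h4⟩, ⟨h1, h2⟩⟩, h5⟩
    have hle : F (x', y') ≤ M := hz0max (x', y') hmem
    have hpos : 0 < (x' - y') ^ α := Real.rpow_pos_of_pos (lt_of_lt_of_le hδ'0 h5) α
    calc |u x' - u y'| = F (x', y') * (x' - y') ^ α := by
          simp only [hF]; field_simp
      _ ≤ M * (x' - y') ^ α := mul_le_mul_of_nonneg_right hle hpos.le
  -- the key Hölder-based bound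
  have keyD : ∀ ⦃y x : ℝ⦄, y ≤ x → ∀ s : Set ℝ, MeasurableSet s → Set.Ioc y x ⊆ s →
      (∫ t in s, |g t| ^ p) ≤ ε ^ p → |u x - u y| ≤ ε * (x - y) ^ α := by
    intro y x hyx s hs hsub hsmall
    have h1 := holder_aux hp hg hgp hyx
    rw [← hαdef] at h1
    have h2 : u x - u y = ∫ t in Set.Ioc y x, g t := by
      rw [hu x y hyx, intervalIntegral.integral_of_le hyx]
    have hΦ : (∫ t in Set.Ioc y x, |g t| ^ p) ≤ ∫ t in s, |g t| ^ p :=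
      setIntegral_mono_set hgp.integrableOn
        (Filter.Eventually.of_forall fun t => habs_nonneg t)
        (HasSubset.Subset.eventuallyLE hsub)
    have hΦ0 : 0 ≤ ∫ t in Set.Ioc y x, |g t| ^ p :=
      setIntegral_nonneg measurableSet_Ioc (fun t _ => habs_nonneg t)
    have h3 : (∫ t in Set.Ioc y x, |g t| ^ p) ^ (1/p) ≤ ε := by
      have h4 := Real.rpow_le_rpow hΦ0 (le_trans hΦ hsmall) (by positivity : (0:ℝ) ≤ 1/p)
      have h5 : (ε ^ p) ^ (1/p) = ε := by
        rw [← Real.rpow_mul hεpos.le, mul_one_div_cancel hp0.ne', Real.rpow_one]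
      rwa [h5] at h4
    calc |u x - u y| = |∫ t in Set.Ioc y x, g t| := by rw [h2]
      _ ≤ (∫ t in Set.Ioc y x, |g t| ^ p) ^ (1/p) * (x - y) ^ α := h1
      _ ≤ ε * (x - y) ^ α :=
          mul_le_mul_of_nonneg_right h3 (Real.rpow_nonneg (sub_nonneg.2 hyx) _)
  -- small gap estimate
  have hsmallgap : ∀ y x : ℝ, y ≤ x → x - y ≤ δ' → |u x - u y| ≤ ε * (x - y) ^ α := by
    intro y x hyx hgap
    refine keyD hyx (Set.Ioc y x) measurableSet_Ioc subset_rfl ?_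
    refine hδ0 _ measurableSet_Ioc ?_
    rw [Real.volume_Ioc]
    exact ENNReal.ofReal_le_ofReal (le_trans hgap hδ'le)
  -- tail estimates
  have htailR : ∀ a b : ℝ, T ≤ a → a ≤ b → |u b - u a| ≤ ε * (b - a) ^ α := by
    intro a b h1 h2
    refine keyD h2 (Set.Icc (-(N:ℝ)) N)ᶜ measurableSet_Icc.compl ?_ hN
    rintro t ⟨ht1, _⟩
    simp only [Set.mem_compl_iff, Set.mem_Icc, not_and, not_le]
    intro _
    rw [hT] at h1
    linarith
  have htailL : ∀ a b : ℝ, a ≤ b → b ≤ -T → |u b - u a| ≤ ε * (b - a) ^ α := by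
    intro a b h1 h2
    refine keyD h1 (Set.Icc (-(N:ℝ)) N)ᶜ measurableSet_Icc.compl ?_ hN
    rintro t ⟨_, ht2⟩
    simp only [Set.mem_compl_iff, Set.mem_Icc, not_and, not_le]
    intro h3
    exfalso
    rw [hT] at h2
    linarith
  -- arithmetic facts
  have hMS : (0:ℝ) ≤ (M - S0) * (1 - κ) :=
    mul_nonneg (sub_nonneg.mpr hS0M) (sub_nonneg.mpr hκ1.le)
  have hε4 : 4 * ε = S0 * (1 - κ) := by rw [hε]; ring
  have hMκ : (0:ℝ) ≤ M * (1 - κ) := mul_nonneg hMpos.le (by linarith)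
  have hS0κ : (0:ℝ) ≤ S0 * κ := mul_nonneg hS0pos.le hκ0.le
  have hS0κ' : (0:ℝ) ≤ S0 * (1 - κ) := mul_nonneg hS0pos.le (by linarith)
  have hεM : ε + M * κ ≤ M := by linarith [hε4, hMS, hS0κ']
  have hεleM : ε ≤ M := by linarith [hε4, hS0κ, hS0M, hMpos]
  have h3ε : 3 * ε ≤ M := by linarith [hε4, hS0κ, hS0M, hS0pos]
  -- d3 : both endpoints far out
  have hd3 : ∀ y x : ℝ, y < -A → A < x → C + A ≤ x - y → |u x - u y| ≤ M * (x - y) ^ α := by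
    intro y x h1 h2 h3
    have hL0 : (0:ℝ) < x - y := by linarith
    have hLα0 : (0:ℝ) ≤ (x - y) ^ α := Real.rpow_nonneg hL0.le _
    have p1 : |u x - u A| ≤ ε * (x - A) ^ α := htailR A x hTA h2.le
    have p3 : |u (-A) - u y| ≤ ε * ((-A) - y) ^ α := htailL y (-A) h1.le (by linarith)
    have ptri : |u x - u y| ≤ |u x - u A| + |u A - u (-A)| + |u (-A) - u y| := by
      have hsum : u x - u y = (u x - u A) + (u A - u (-A)) + (u (-A) - u y) := by ring
      rw [hsum]; exact abs_add_three _ _ _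
    have e1 : (x - A) ^ α ≤ (x - y) ^ α :=
      Real.rpow_le_rpow (by linarith) (by linarith) hα0.le
    have e3 : ((-A) - y) ^ α ≤ (x - y) ^ α :=
      Real.rpow_le_rpow (by linarith) (by linarith) hα0.le
    have e2 : (C + A) ^ α ≤ (x - y) ^ α :=
      Real.rpow_le_rpow (by linarith) h3 hα0.le
    have p2 : |u A - u (-A)| ≤ ε * (x - y) ^ α := by
      calc |u A - u (-A)| = D0 := hD0.symm
        _ ≤ ε * (C + A) ^ α := hCd
        _ ≤ ε * (x - y) ^ α := mul_le_mul_of_nonneg_left e2 hεpos.le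
    calc |u x - u y| ≤ |u x - u A| + |u A - u (-A)| + |u (-A) - u y| := ptri
      _ ≤ ε * (x - y) ^ α + ε * (x - y) ^ α + ε * (x - y) ^ α := by
          have q1 : |u x - u A| ≤ ε * (x - y) ^ α :=
            p1.trans (mul_le_mul_of_nonneg_left e1 hεpos.le)
          have q3 : |u (-A) - u y| ≤ ε * (x - y) ^ α :=
            p3.trans (mul_le_mul_of_nonneg_left e3 hεpos.le)
          linarith
      _ ≤ M * (x - y) ^ α := by
          linarith [mul_nonneg (by linarith : (0:ℝ) ≤ M - 3*ε) hLα0]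
  -- half estimate : κ * L^α
  have hhalf : ∀ L d : ℝ, 0 < L → 0 ≤ d → 2 * d ≤ L → d ^ α ≤ κ * L ^ α := by
    intro L d hL hd h2d
    have h1 : d ≤ L * (1/2) := by linarith
    have h2 : d ^ α ≤ (L * (1/2)) ^ α :=
      Real.rpow_le_rpow hd h1 hα0.le
    rw [Real.mul_rpow hL.le (by norm_num : (0:ℝ) ≤ 1/2)] at h2
    calc d ^ α ≤ L ^ α * (1/2) ^ α := h2
      _ = κ * L ^ α := by rw [hκ]; ring
  -- main estimate for ordered pairs
  have hmain : ∀ y x : ℝ, y < x → |u x - u y| ≤ M * (x - y) ^ α := by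
    intro y x hyx
    have hL0 : (0:ℝ) < x - y := by linarith
    have hLα0 : (0:ℝ) ≤ (x - y) ^ α := Real.rpow_nonneg hL0.le _
    rcases le_or_gt (x - y) δ' with hcase | hgap
    · calc |u x - u y| ≤ ε * (x - y) ^ α := hsmallgap y x hyx.le hcase
        _ ≤ M * (x - y) ^ α := mul_le_mul_of_nonneg_right hεleM hLα0
    rcases le_or_gt T y with hyT | hyT
    · calc |u x - u y| ≤ ε * (x - y) ^ α := htailR y x hyT hyx.le
        _ ≤ M * (x - y) ^ α := mul_le_mul_of_nonneg_right hεleM hLα0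
    rcases le_or_gt x (-T) with hxT | hxT
    · calc |u x - u y| ≤ ε * (x - y) ^ α := htailL y x hyx.le hxT
        _ ≤ M * (x - y) ^ α := mul_le_mul_of_nonneg_right hεleM hLα0
    rcases le_or_gt x C with hxC | hxC
    · rcases le_or_gt (-C) y with hyC | hyC
      · -- box case
        exact KM x y hyC (by linarith) (by linarith) hxC hgap.le
      · -- y < -C, x ≤ C
        rcases le_or_gt x (C - 2*A) with hx2 | hx2
        · -- split at -A
          have hp1 : |u x - u (-A)| ≤ M * (x + A) ^ α := by
            have := KM x (-A) (by linarith) (by linarith) (by linarith) (by linarith)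
              (by simp only [hA]; linarith)
            calc |u x - u (-A)| ≤ M * (x - (-A)) ^ α := this
              _ = M * (x + A) ^ α := by ring_nf
          have hp2 : |u (-A) - u y| ≤ ε * ((-A) - y) ^ α :=
            htailL y (-A) (by linarith) (by linarith)
          have ptri : |u x - u y| ≤ |u x - u (-A)| + |u (-A) - u y| := by
            have hsum : u x - u y = (u x - u (-A)) + (u (-A) - u y) := by ring
            rw [hsum]; exact abs_add_le _ _
          have e2 : ((-A) - y) ^ α ≤ (x - y) ^ α :=
            Real.rpow_le_rpow (by linarith) (by linarith) hα0.le
          have e1 : (x + A) ^ α ≤ κ * (x - y) ^ α := by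
            refine hhalf (x - y) (x + A) hL0 (by linarith) ?_
            linarith
          calc |u x - u y| ≤ |u x - u (-A)| + |u (-A) - u y| := ptri
            _ ≤ M * (κ * (x - y) ^ α) + ε * (x - y) ^ α := by
                have q1 : |u x - u (-A)| ≤ M * (κ * (x - y) ^ α) :=
                  hp1.trans (mul_le_mul_of_nonneg_left e1 hMpos.le)
                have q2 : |u (-A) - u y| ≤ ε * (x - y) ^ α :=
                  hp2.trans (mul_le_mul_of_nonneg_left e2 hεpos.le)
                linarith
            _ ≤ M * (x - y) ^ α := by
                linarith [mul_nonneg (by linarith : (0:ℝ) ≤ M - ε - M*κ) hLα0]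
        · -- d3
          exact hd3 y x (by linarith) (by linarith) (by linarith)
    · -- C < x
      rcases le_or_gt (2*A - C) y with hy2 | hy2
      · -- split at A
        have hp1 : |u x - u A| ≤ ε * (x - A) ^ α := htailR A x hTA (by linarith)
        have hp2 : |u A - u y| ≤ M * (A - y) ^ α :=
          KM A y (by linarith) (by linarith) (by linarith) hAC (by simp only [hA]; linarith)
        have ptri : |u x - u y| ≤ |u x - u A| + |u A - u y| := by
          have hsum : u x - u y = (u x - u A) + (u A - u y) := by ring
          rw [hsum]; exact abs_add_le _ _
        have e1 : (x - A) ^ α ≤ (x - y) ^ α :=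
          Real.rpow_le_rpow (by linarith) (by linarith) hα0.le
        have e2 : (A - y) ^ α ≤ κ * (x - y) ^ α := by
          refine hhalf (x - y) (A - y) hL0 (by linarith) ?_
          linarith
        calc |u x - u y| ≤ |u x - u A| + |u A - u y| := ptri
          _ ≤ ε * (x - y) ^ α + M * (κ * (x - y) ^ α) := by
              have q1 : |u x - u A| ≤ ε * (x - y) ^ α :=
                hp1.trans (mul_le_mul_of_nonneg_left e1 hεpos.le)
              have q2 : |u A - u y| ≤ M * (κ * (x - y) ^ α) :=
                hp2.trans (mul_le_mul_of_nonneg_left e2 hMpos.le)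
              linarith
          _ ≤ M * (x - y) ^ α := by
              linarith [mul_nonneg (by linarith : (0:ℝ) ≤ M - ε - M*κ) hLα0]
      · -- d3
        exact hd3 y x (by linarith) (by linarith) (by linarith)
  -- conclusion
  refine ⟨z0.1, z0.2, ?_, ?_⟩
  · intro h
    rw [h] at hz0gap
    simp at hz0gap
    linarith
  · intro x y hxy
    have hz0pos : 0 < z0.1 - z0.2 := lt_of_lt_of_le hδ'0 hz0gap
    have habs0 : |z0.1 - z0.2| = z0.1 - z0.2 := abs_of_pos hz0pos
    have hgoalR : |u z0.1 - u z0.2| / |z0.1 - z0.2| ^ α = M := by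
      rw [habs0, hM, hF]
    rw [hgoalR]
    rcases lt_or_gt_of_ne hxy with h | h
    · -- x < y
      have h1 := hmain x y h
      have habs1 : |x - y| = y - x := by rw [abs_sub_comm, abs_of_pos (by linarith)]
      have habs2 : |u x - u y| = |u y - u x| := abs_sub_comm _ _
      rw [habs1, habs2, div_le_iff₀ (Real.rpow_pos_of_pos (by linarith) _)]
      exact h1
    · -- y < x
      have h1 := hmain y x h
      have habs1 : |x - y| = x - y := abs_of_pos (by linarith)
      rw [habs1, div_le_iff₀ (Real.rpow_pos_of_pos (by linarith) _)]
      exact h1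
end
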